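/- Let d ≥ 1, T > 0, let V : ℝ^d → ℝ be C² and ℤ^d-periodic, let α > 0 and let ψ : ℝ → ℝ be a nonnegative C¹ ℤ-periodic function with ∫_{[0,1)} ψ = 1; set φ = α + ψ. For a probability measure μ on ℝ^d define b_φ(μ, x) = (∫ φ(x − z¹) ∂₁V(z) dμ(z)) / (∫ φ(x − z¹) dμ(z)) for x ∈ ℝ (the denominator is ≥ α). Suppose X and Y are two continuous adapted processes on the same filtered probability space, driven by the same standard d-dimensional Brownian motion W, with X₀ = Y₀ almost surely, such that almost surely X_t = X₀ + ∫₀ᵗ (−∇V(X_s) + b_φ(μ_s, X_s¹) e₁) ds + √2 W_t and Y_t = Y₀ + ∫₀ᵗ (−∇V(Y_s) + b_φ(ν_s, Y_s¹) e₁) ds + √2 W_t for all t ∈ [0,T], where μ_s and ν_s denote the laws of X_s and Y_s respectively. Then almost surely X_t = Y_t for all t ∈ [0,T]. -/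

import Mathlib

open MeasureTheory ProbabilityTheory

/-- The centered Gaussian distribution on `ℝ^d` with covariance matrix `v·Id`. -/
noncomputable def stdGaussian (d : ℕ) (v : ℝ) :
    Measure (EuclideanSpace ℝ (Fin d)) :=
  (Measure.pi fun _ : Fin d => gaussianReal 0 v.toNNReal).map
    (MeasurableEquiv.toLp 2 (Fin d → ℝ))

/-- A standard `d`-dimensional Brownian motion on a filtered probability space. -/
structure IsStdBrownian {Ω : Type*} [m : MeasurableSpace Ω] (P : Measure Ω)
    (F : Filtration ℝ m) {d : ℕ} (W : ℝ → Ω → EuclideanSpace ℝ (Fin d)) : Prop where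
  adapted : Adapted F W
  cont : ∀ ω, Continuous fun t => W t ω
  start : ∀ ω, W 0 ω = 0
  indep : ∀ s t : ℝ, 0 ≤ s → s ≤ t →
      Indep (MeasurableSpace.comap (fun ω => W t ω - W s ω) inferInstance) (F s) P
  law : ∀ s t : ℝ, 0 ≤ s → s ≤ t →
      P.map (fun ω => W t ω - W s ω) = stdGaussian d (t - s)

/-- The regularized (Nadaraya–Watson) biasing drift
`b_φ(μ, x) = (∫ φ(x - z¹) ∂₁V(z) dμ(z)) / (∫ φ(x - z¹) dμ(z))`. -/
noncomputable def nwDrift {d : ℕ} (hd : 0 < d) (V : EuclideanSpace ℝ (Fin d) → ℝ)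
    (φ : ℝ → ℝ) (μ : Measure (EuclideanSpace ℝ (Fin d))) (x : ℝ) : ℝ :=
  (∫ z, φ (x - z ⟨0, hd⟩) * fderiv ℝ V z (EuclideanSpace.single ⟨0, hd⟩ (1:ℝ)) ∂μ) /
    ∫ z, φ (x - z ⟨0, hd⟩) ∂μ

namespace Stmt10Aux


lemma abs_coord_le_norm {d : ℕ} (x : EuclideanSpace ℝ (Fin d)) (i : Fin d) :
    |x i| ≤ ‖x‖ := by
  rw [EuclideanSpace.norm_eq]
  have h1 : |x i| = Real.sqrt (‖x i‖ ^ 2) := by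
    rw [Real.sqrt_sq_eq_abs, abs_norm, Real.norm_eq_abs]
  rw [h1]
  apply Real.sqrt_le_sqrt
  exact Finset.single_le_sum (f := fun j => ‖x j‖ ^ 2) (fun j _ => by positivity)
    (Finset.mem_univ i)

lemma isCompact_box (d : ℕ) :
    IsCompact {y : EuclideanSpace ℝ (Fin d) | ∀ i, y i ∈ Set.Icc (0:ℝ) 1} := by
  apply Metric.isCompact_of_isClosed_isBounded
  · have : {y : EuclideanSpace ℝ (Fin d) | ∀ i, y i ∈ Set.Icc (0:ℝ) 1} =
        ⋂ i, (fun y : EuclideanSpace ℝ (Fin d) => y i) ⁻¹' Set.Icc (0:ℝ) 1 := by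
      ext y; simp
    rw [this]
    exact isClosed_iInter fun i =>
      IsClosed.preimage (EuclideanSpace.proj i).continuous isClosed_Icc
  · apply Bornology.IsBounded.subset (Metric.isBounded_closedBall (x := (0 : EuclideanSpace ℝ (Fin d))) (r := Real.sqrt d))
    intro y hy
    simp only [Metric.mem_closedBall, dist_zero_right]
    rw [EuclideanSpace.norm_eq]
    have : ∑ i : Fin d, ‖y i‖ ^ 2 ≤ (d : ℝ) := by
      calc ∑ i : Fin d, ‖y i‖ ^ 2 ≤ ∑ _i : Fin d, (1:ℝ) := by
            apply Finset.sum_le_sum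
            intro i _
            have h1 := (hy i).1; have h2 := (hy i).2
            rw [Real.norm_eq_abs, abs_of_nonneg h1]
            nlinarith
        _ = d := by simp
    calc Real.sqrt (∑ i : Fin d, ‖y i‖ ^ 2) ≤ Real.sqrt d := Real.sqrt_le_sqrt this
      _ = Real.sqrt d := rfl

lemma bound_of_latticePeriodic {d : ℕ} {G : Type*} [NormedAddCommGroup G]
    (f : EuclideanSpace ℝ (Fin d) → G) (hf : Continuous f)
    (hper : ∀ (x : EuclideanSpace ℝ (Fin d)) (q : Fin d → ℤ),
      f (x + (show EuclideanSpace ℝ (Fin d) from WithLp.toLp 2 (fun i => (q i : ℝ)))) = f x) :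
    ∃ C : ℝ, 0 ≤ C ∧ ∀ x, ‖f x‖ ≤ C := by
  obtain ⟨C, hC⟩ := (isCompact_box d).exists_bound_of_continuousOn hf.continuousOn
  refine ⟨max C 0, le_max_right _ _, fun x => ?_⟩
  set q : Fin d → ℤ := fun i => ⌊x i⌋ with hq
  set y : EuclideanSpace ℝ (Fin d) :=
    x - (show EuclideanSpace ℝ (Fin d) from WithLp.toLp 2 (fun i => (q i : ℝ))) with hy
  have hyK : y ∈ {y : EuclideanSpace ℝ (Fin d) | ∀ i, y i ∈ Set.Icc (0:ℝ) 1} := by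
    intro i
    have : y i = Int.fract (x i) := by
      rw [hy]
      show (x - _) i = _
      rw [PiLp.sub_apply]
      rfl
    rw [this]
    exact ⟨Int.fract_nonneg _, (Int.fract_lt_one _).le⟩
  have hxy : x = y + (show EuclideanSpace ℝ (Fin d) from WithLp.toLp 2 (fun i => (q i : ℝ))) := by
    rw [hy]; abel
  calc ‖f x‖ = ‖f y‖ := by rw [hxy, hper]
    _ ≤ C := hC y hyK
    _ ≤ max C 0 := le_max_left _ _

lemma fderiv_shift {E F : Type*} [NormedAddCommGroup E] [NormedSpace ℝ E]
    [NormedAddCommGroup F] [NormedSpace ℝ F]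
    (f : E → F) (c : E) (x : E) :
    fderiv ℝ (fun y => f (y + c)) x = fderiv ℝ f (x + c) := by
  by_cases h : DifferentiableAt ℝ f (x + c)
  · exact (h.hasFDerivAt.comp x ((hasFDerivAt_id x).add_const c)).fderiv.trans
      (by simp)
  · have h2 : ¬ DifferentiableAt ℝ (fun y => f (y + c)) x := by
      intro hcon
      apply h
      have h3 := DifferentiableAt.comp (x + c)
        (g := fun y => f (y + c)) (f := fun z => z - c)
        (by simpa using hcon) (differentiableAt_id.sub_const c)
      have h4 : ((fun y => f (y + c)) ∘ fun z => z - c) = f := by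
        funext z; simp
      rwa [h4] at h3
    rw [fderiv_zero_of_not_differentiableAt h, fderiv_zero_of_not_differentiableAt h2]

/-- If `f` is lattice-periodic, so is `fderiv f`. -/
lemma fderiv_latticePeriodic {d : ℕ} {G : Type*} [NormedAddCommGroup G] [NormedSpace ℝ G]
    (f : EuclideanSpace ℝ (Fin d) → G)
    (hper : ∀ (x : EuclideanSpace ℝ (Fin d)) (q : Fin d → ℤ),
      f (x + (show EuclideanSpace ℝ (Fin d) from WithLp.toLp 2 (fun i => (q i : ℝ)))) = f x)
    (x : EuclideanSpace ℝ (Fin d)) (q : Fin d → ℤ) :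
    fderiv ℝ f (x + (show EuclideanSpace ℝ (Fin d) from WithLp.toLp 2 (fun i => (q i : ℝ))))
      = fderiv ℝ f x := by
  rw [← fderiv_shift f _ x]
  congr 1
  funext y
  exact hper y q




lemma abs_coord_sub_le_norm {d : ℕ} (x y : EuclideanSpace ℝ (Fin d)) (i : Fin d) :
    |x i - y i| ≤ ‖x - y‖ := by
  have := abs_coord_le_norm (x - y) i
  rwa [PiLp.sub_apply] at this

lemma abs_int_le {Ω : Type*} [MeasurableSpace Ω] {P : Measure Ω} (f : Ω → ℝ) :
    |∫ ω, f ω ∂P| ≤ ∫ ω, |f ω| ∂P := by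
  simpa [Real.norm_eq_abs] using norm_integral_le_integral_norm (μ := P) f

lemma int_const_mul {Ω : Type*} [MeasurableSpace Ω] (P : Measure Ω) (c : ℝ)
    (f : Ω → ℝ) : ∫ ω, c * f ω ∂P = c * ∫ ω, f ω ∂P := by
  simpa [smul_eq_mul] using integral_smul (μ := P) c f

lemma integrable_of_bdd {Ω : Type*} [MeasurableSpace Ω] {P : Measure Ω}
    [IsFiniteMeasure P] {f : Ω → ℝ} (hm : AEStronglyMeasurable f P) (C : ℝ)
    (h : ∀ ω, |f ω| ≤ C) : Integrable f P :=
  ⟨hm, HasFiniteIntegral.of_bounded (C := C) (Filter.Eventually.of_forall h)⟩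

lemma key {d : ℕ} (i0 : Fin d) {Ω : Type*} [MeasurableSpace Ω] (P : Measure Ω)
    [IsProbabilityMeasure P] (φ : ℝ → ℝ) (g : EuclideanSpace ℝ (Fin d) → ℝ)
    (α Mφ Lφ Gv Lv : ℝ) (hα : 0 < α) (hGv : 0 ≤ Gv) (hLφ : 0 ≤ Lφ) (hMφ : 0 ≤ Mφ)
    (hLv : 0 ≤ Lv)
    (hφc : Continuous φ) (hgc : Continuous g)
    (hφlb : ∀ r, α ≤ φ r) (hφub : ∀ r, |φ r| ≤ Mφ)
    (hφlip : ∀ x y, |φ x - φ y| ≤ Lφ * |x - y|)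
    (hgb : ∀ z, |g z| ≤ Gv) (hglip : ∀ z w, |g z - g w| ≤ Lv * ‖z - w‖)
    (X' Y' : Ω → EuclideanSpace ℝ (Fin d)) (hX' : Measurable X') (hY' : Measurable Y')
    (hint : Integrable (fun ω => ‖X' ω - Y' ω‖) P) (a b : ℝ) :
    |(∫ z, φ (a - z i0) * g z ∂(P.map X')) / (∫ z, φ (a - z i0) ∂(P.map X')) -
     (∫ z, φ (b - z i0) * g z ∂(P.map Y')) / (∫ z, φ (b - z i0) ∂(P.map Y'))|
      ≤ ((Gv * Lφ + Mφ * Lv) / α + Mφ * Gv * Lφ / α ^ 2) *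
        (|a - b| + ∫ ω, ‖X' ω - Y' ω‖ ∂P) := by
  have hcoord : Continuous fun z : EuclideanSpace ℝ (Fin d) => z i0 :=
    (EuclideanSpace.proj i0).continuous
  -- change of variables
  have hmap1 : (∫ z, φ (a - z i0) * g z ∂(P.map X')) =
      ∫ ω, φ (a - X' ω i0) * g (X' ω) ∂P :=
    integral_map hX'.aemeasurable
      (((hφc.comp (continuous_const.sub hcoord)).mul hgc).aestronglyMeasurable)
  have hmap2 : (∫ z, φ (a - z i0) ∂(P.map X')) = ∫ ω, φ (a - X' ω i0) ∂P :=
    integral_map hX'.aemeasurable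
      ((hφc.comp (continuous_const.sub hcoord)).aestronglyMeasurable)
  have hmap3 : (∫ z, φ (b - z i0) * g z ∂(P.map Y')) =
      ∫ ω, φ (b - Y' ω i0) * g (Y' ω) ∂P :=
    integral_map hY'.aemeasurable
      (((hφc.comp (continuous_const.sub hcoord)).mul hgc).aestronglyMeasurable)
  have hmap4 : (∫ z, φ (b - z i0) ∂(P.map Y')) = ∫ ω, φ (b - Y' ω i0) ∂P :=
    integral_map hY'.aemeasurable
      ((hφc.comp (continuous_const.sub hcoord)).aestronglyMeasurable)
  rw [hmap1, hmap2, hmap3, hmap4]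
  set N1 := ∫ ω, φ (a - X' ω i0) * g (X' ω) ∂P with hN1
  set D1 := ∫ ω, φ (a - X' ω i0) ∂P with hD1
  set N2 := ∫ ω, φ (b - Y' ω i0) * g (Y' ω) ∂P with hN2
  set D2 := ∫ ω, φ (b - Y' ω i0) ∂P with hD2
  set δ := |a - b| with hδ
  set u' := ∫ ω, ‖X' ω - Y' ω‖ ∂P with hu'
  have hu'0 : 0 ≤ u' := integral_nonneg fun ω => norm_nonneg _
  have hδ0 : 0 ≤ δ := abs_nonneg _
  -- measurability of integrands
  have hmX : Measurable fun ω => X' ω i0 := hcoord.measurable.comp hX'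
  have hmY : Measurable fun ω => Y' ω i0 := hcoord.measurable.comp hY'
  have hmf1 : AEStronglyMeasurable (fun ω => φ (a - X' ω i0) * g (X' ω)) P :=
    ((hφc.measurable.comp (measurable_const.sub hmX)).mul
      (hgc.measurable.comp hX')).aestronglyMeasurable
  have hmf2 : AEStronglyMeasurable (fun ω => φ (a - X' ω i0)) P :=
    (hφc.measurable.comp (measurable_const.sub hmX)).aestronglyMeasurable
  have hmf3 : AEStronglyMeasurable (fun ω => φ (b - Y' ω i0) * g (Y' ω)) P :=
    ((hφc.measurable.comp (measurable_const.sub hmY)).mul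
      (hgc.measurable.comp hY')).aestronglyMeasurable
  have hmf4 : AEStronglyMeasurable (fun ω => φ (b - Y' ω i0)) P :=
    (hφc.measurable.comp (measurable_const.sub hmY)).aestronglyMeasurable
  -- integrability
  have hint1 : Integrable (fun ω => φ (a - X' ω i0) * g (X' ω)) P :=
    integrable_of_bdd hmf1 (Mφ * Gv) fun ω => by
      rw [abs_mul]; exact mul_le_mul (hφub _) (hgb _) (abs_nonneg _) hMφ
  have hint2 : Integrable (fun ω => φ (a - X' ω i0)) P :=
    integrable_of_bdd hmf2 Mφ fun ω => hφub _
  have hint3 : Integrable (fun ω => φ (b - Y' ω i0) * g (Y' ω)) P :=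
    integrable_of_bdd hmf3 (Mφ * Gv) fun ω => by
      rw [abs_mul]; exact mul_le_mul (hφub _) (hgb _) (abs_nonneg _) hMφ
  have hint4 : Integrable (fun ω => φ (b - Y' ω i0)) P :=
    integrable_of_bdd hmf4 Mφ fun ω => hφub _
  -- lower bounds on D
  have hD1α : α ≤ D1 := by
    have : (α : ℝ) = ∫ _ω, α ∂P := by simp
    rw [hD1, this]
    exact integral_mono (integrable_const α) hint2 fun ω => hφlb _
  have hD2α : α ≤ D2 := by
    have : (α : ℝ) = ∫ _ω, α ∂P := by simp
    rw [hD2, this]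
    exact integral_mono (integrable_const α) hint4 fun ω => hφlb _
  have hD1pos : 0 < D1 := lt_of_lt_of_le hα hD1α
  have hD2pos : 0 < D2 := lt_of_lt_of_le hα hD2α
  -- bound on N2
  have hN2b : |N2| ≤ Mφ * Gv := by
    calc |N2| ≤ ∫ ω, |φ (b - Y' ω i0) * g (Y' ω)| ∂P := by
          exact abs_int_le _
      _ ≤ ∫ _ω, Mφ * Gv ∂P := integral_mono hint3.abs (integrable_const _)
          fun ω => by
            rw [abs_mul]; exact mul_le_mul (hφub _) (hgb _) (abs_nonneg _) hMφ
      _ = Mφ * Gv := by simp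
  -- difference of numerators
  have hNdiff : |N1 - N2| ≤ Gv * Lφ * δ + (Gv * Lφ + Mφ * Lv) * u' := by
    rw [hN1, hN2, ← integral_sub hint1 hint3]
    have hptw : ∀ ω, |φ (a - X' ω i0) * g (X' ω) - φ (b - Y' ω i0) * g (Y' ω)|
        ≤ Gv * Lφ * δ + (Gv * Lφ + Mφ * Lv) * ‖X' ω - Y' ω‖ := by
      intro ω
      have heq : φ (a - X' ω i0) * g (X' ω) - φ (b - Y' ω i0) * g (Y' ω)
          = (φ (a - X' ω i0) - φ (b - Y' ω i0)) * g (X' ω)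
            + φ (b - Y' ω i0) * (g (X' ω) - g (Y' ω)) := by ring
      rw [heq]
      have h1 : |(φ (a - X' ω i0) - φ (b - Y' ω i0)) * g (X' ω)|
          ≤ (Lφ * (δ + ‖X' ω - Y' ω‖)) * Gv := by
        rw [abs_mul]
        apply mul_le_mul _ (hgb _) (abs_nonneg _) (by positivity)
        calc |φ (a - X' ω i0) - φ (b - Y' ω i0)| ≤ Lφ * |(a - X' ω i0) - (b - Y' ω i0)| :=
              hφlip _ _
          _ ≤ Lφ * (δ + ‖X' ω - Y' ω‖) := by
              apply mul_le_mul_of_nonneg_left _ hLφ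
              calc |(a - X' ω i0) - (b - Y' ω i0)| = |(a - b) + (Y' ω i0 - X' ω i0)| := by
                    ring_nf
                _ ≤ |a - b| + |Y' ω i0 - X' ω i0| := abs_add_le _ _
                _ ≤ δ + ‖X' ω - Y' ω‖ := by
                    apply add_le_add le_rfl
                    rw [abs_sub_comm]
                    exact abs_coord_sub_le_norm _ _ _
      have h2 : |φ (b - Y' ω i0) * (g (X' ω) - g (Y' ω))| ≤ Mφ * (Lv * ‖X' ω - Y' ω‖) := by
        rw [abs_mul]
        exact mul_le_mul (hφub _) (hglip _ _) (abs_nonneg _) hMφ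
      calc |(φ (a - X' ω i0) - φ (b - Y' ω i0)) * g (X' ω)
            + φ (b - Y' ω i0) * (g (X' ω) - g (Y' ω))|
          ≤ |(φ (a - X' ω i0) - φ (b - Y' ω i0)) * g (X' ω)|
            + |φ (b - Y' ω i0) * (g (X' ω) - g (Y' ω))| := abs_add_le _ _
        _ ≤ (Lφ * (δ + ‖X' ω - Y' ω‖)) * Gv + Mφ * (Lv * ‖X' ω - Y' ω‖) :=
            add_le_add h1 h2
        _ = Gv * Lφ * δ + (Gv * Lφ + Mφ * Lv) * ‖X' ω - Y' ω‖ := by ring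
    calc |∫ ω, (φ (a - X' ω i0) * g (X' ω) - φ (b - Y' ω i0) * g (Y' ω)) ∂P|
        ≤ ∫ ω, |φ (a - X' ω i0) * g (X' ω) - φ (b - Y' ω i0) * g (Y' ω)| ∂P :=
          abs_int_le _
      _ ≤ ∫ ω, (Gv * Lφ * δ + (Gv * Lφ + Mφ * Lv) * ‖X' ω - Y' ω‖) ∂P := by
          apply integral_mono (hint1.sub hint3).abs
            ((integrable_const _).add (hint.const_mul _)) hptw
      _ = Gv * Lφ * δ + (Gv * Lφ + Mφ * Lv) * u' := by
          rw [integral_add (integrable_const _) (hint.const_mul _),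
            integral_const, int_const_mul, ← hu']
          simp
  -- difference of denominators
  have hDdiff : |D1 - D2| ≤ Lφ * δ + Lφ * u' := by
    rw [hD1, hD2, ← integral_sub hint2 hint4]
    have hptw : ∀ ω, |φ (a - X' ω i0) - φ (b - Y' ω i0)|
        ≤ Lφ * δ + Lφ * ‖X' ω - Y' ω‖ := by
      intro ω
      calc |φ (a - X' ω i0) - φ (b - Y' ω i0)| ≤ Lφ * |(a - X' ω i0) - (b - Y' ω i0)| :=
            hφlip _ _
        _ ≤ Lφ * (δ + ‖X' ω - Y' ω‖) := by
            apply mul_le_mul_of_nonneg_left _ hLφ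
            calc |(a - X' ω i0) - (b - Y' ω i0)| = |(a - b) + (Y' ω i0 - X' ω i0)| := by
                  ring_nf
              _ ≤ |a - b| + |Y' ω i0 - X' ω i0| := abs_add_le _ _
              _ ≤ δ + ‖X' ω - Y' ω‖ := by
                  apply add_le_add le_rfl
                  rw [abs_sub_comm]
                  exact abs_coord_sub_le_norm _ _ _
        _ = Lφ * δ + Lφ * ‖X' ω - Y' ω‖ := by ring
    calc |∫ ω, (φ (a - X' ω i0) - φ (b - Y' ω i0)) ∂P|
        ≤ ∫ ω, |φ (a - X' ω i0) - φ (b - Y' ω i0)| ∂P := abs_int_le _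
      _ ≤ ∫ ω, (Lφ * δ + Lφ * ‖X' ω - Y' ω‖) ∂P := by
          apply integral_mono (hint2.sub hint4).abs
            ((integrable_const _).add (hint.const_mul _)) hptw
      _ = Lφ * δ + Lφ * u' := by
          rw [integral_add (integrable_const _) (hint.const_mul _),
            integral_const, int_const_mul, ← hu']
          simp
  -- final algebra
  have keyeq : N1 / D1 - N2 / D2 = (N1 - N2) / D1 + N2 * (D2 - D1) / (D1 * D2) := by
    field_simp
    ring
  calc |N1 / D1 - N2 / D2| = |(N1 - N2) / D1 + N2 * (D2 - D1) / (D1 * D2)| := by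
        rw [keyeq]
    _ ≤ |(N1 - N2) / D1| + |N2 * (D2 - D1) / (D1 * D2)| := abs_add_le _ _
    _ = |N1 - N2| / D1 + |N2| * |D1 - D2| / (D1 * D2) := by
        simp only [abs_div, abs_mul, abs_of_pos hD1pos, abs_of_pos hD2pos,
          abs_sub_comm D2 D1]
    _ ≤ (Gv * Lφ * δ + (Gv * Lφ + Mφ * Lv) * u') / α
        + (Mφ * Gv) * (Lφ * δ + Lφ * u') / (α * α) := by
        gcongr
    _ ≤ (Gv * Lφ + Mφ * Lv) * (δ + u') / α
        + Mφ * Gv * (Lφ * δ + Lφ * u') / (α * α) := by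
        gcongr
        nlinarith [mul_nonneg (mul_nonneg hMφ hLv) hδ0]
    _ = ((Gv * Lφ + Mφ * Lv) / α + Mφ * Gv * Lφ / α ^ 2) * (δ + u') := by
        have hαne : α ≠ 0 := ne_of_gt hα
        field_simp



lemma bound_of_periodic_real (f : ℝ → ℝ) (hf : Continuous f)
    (hper : ∀ x, f (x + 1) = f x) : ∃ C : ℝ, 0 ≤ C ∧ ∀ x, |f x| ≤ C := by
  obtain ⟨C, hC⟩ := isCompact_Icc.exists_bound_of_continuousOn
    (hf.continuousOn : ContinuousOn f (Set.Icc (0:ℝ) 1))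
  refine ⟨max C 0, le_max_right _ _, fun x => ?_⟩
  have hp : Function.Periodic f 1 := hper
  have h1 : f (x - (⌊x⌋ : ℝ) * 1) = f x := hp.sub_int_mul_eq ⌊x⌋
  have h2 : x - (⌊x⌋ : ℝ) * 1 = Int.fract x := by
    rw [mul_one]; rfl
  have h3 : Int.fract x ∈ Set.Icc (0:ℝ) 1 :=
    ⟨Int.fract_nonneg _, (Int.fract_lt_one _).le⟩
  calc |f x| = |f (Int.fract x)| := by rw [← h1, h2]
    _ = ‖f (Int.fract x)‖ := (Real.norm_eq_abs _).symm
    _ ≤ C := hC _ h3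
    _ ≤ max C 0 := le_max_left _ _

lemma map_num {d : ℕ} (i0 : Fin d) {Ω : Type*} [MeasurableSpace Ω] (P : Measure Ω)
    (φ : ℝ → ℝ) (g : EuclideanSpace ℝ (Fin d) → ℝ) (hφc : Continuous φ)
    (hgc : Continuous g) (X' : Ω → EuclideanSpace ℝ (Fin d)) (hX' : Measurable X')
    (x : ℝ) :
    (∫ z, φ (x - z i0) * g z ∂(P.map X')) = ∫ ω, φ (x - X' ω i0) * g (X' ω) ∂P :=
  integral_map hX'.aemeasurable
    (((hφc.comp (continuous_const.sub (EuclideanSpace.proj i0).continuous)).mul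
      hgc).aestronglyMeasurable)

lemma map_den {d : ℕ} (i0 : Fin d) {Ω : Type*} [MeasurableSpace Ω] (P : Measure Ω)
    (φ : ℝ → ℝ) (hφc : Continuous φ) (X' : Ω → EuclideanSpace ℝ (Fin d))
    (hX' : Measurable X') (x : ℝ) :
    (∫ z, φ (x - z i0) ∂(P.map X')) = ∫ ω, φ (x - X' ω i0) ∂P :=
  integral_map hX'.aemeasurable
    ((hφc.comp (continuous_const.sub (EuclideanSpace.proj i0).continuous)).aestronglyMeasurable)

lemma den_props {d : ℕ} (i0 : Fin d) {Ω : Type*} [MeasurableSpace Ω] (P : Measure Ω)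
    [IsProbabilityMeasure P] (φ : ℝ → ℝ) (α Mφ : ℝ)
    (hφc : Continuous φ) (hφlb : ∀ r, α ≤ φ r) (hφub : ∀ r, |φ r| ≤ Mφ)
    (X' : Ω → EuclideanSpace ℝ (Fin d)) (hX' : Measurable X') (x : ℝ) :
    α ≤ ∫ ω, φ (x - X' ω i0) ∂P := by
  have hmX : Measurable fun ω => X' ω i0 :=
    (EuclideanSpace.proj i0).continuous.measurable.comp hX'
  have hint2 : Integrable (fun ω => φ (x - X' ω i0)) P :=
    ⟨(hφc.measurable.comp (measurable_const.sub hmX)).aestronglyMeasurable,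
      HasFiniteIntegral.of_bounded (C := Mφ) (Filter.Eventually.of_forall fun ω => by
        simpa [Real.norm_eq_abs] using hφub (x - X' ω i0))⟩
  have : (α : ℝ) = ∫ _ω, α ∂P := by simp
  rw [this]
  exact integral_mono (integrable_const α) hint2 fun ω => hφlb _

lemma key_bound {d : ℕ} (i0 : Fin d) {Ω : Type*} [MeasurableSpace Ω] (P : Measure Ω)
    [IsProbabilityMeasure P] (φ : ℝ → ℝ) (g : EuclideanSpace ℝ (Fin d) → ℝ)
    (α Mφ Gv : ℝ) (hα : 0 < α) (hGv : 0 ≤ Gv) (hMφ : 0 ≤ Mφ)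
    (hφc : Continuous φ) (hgc : Continuous g)
    (hφlb : ∀ r, α ≤ φ r) (hφub : ∀ r, |φ r| ≤ Mφ)
    (hgb : ∀ z, |g z| ≤ Gv)
    (X' : Ω → EuclideanSpace ℝ (Fin d)) (hX' : Measurable X') (x : ℝ) :
    |(∫ z, φ (x - z i0) * g z ∂(P.map X')) / (∫ z, φ (x - z i0) ∂(P.map X'))|
      ≤ Mφ * Gv / α := by
  rw [map_num i0 P φ g hφc hgc X' hX' x, map_den i0 P φ hφc X' hX' x]
  have hmX : Measurable fun ω => X' ω i0 :=
    (EuclideanSpace.proj i0).continuous.measurable.comp hX'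
  have hD := den_props i0 P φ α Mφ hφc hφlb hφub X' hX' x
  have hDpos : 0 < ∫ ω, φ (x - X' ω i0) ∂P := lt_of_lt_of_le hα hD
  have hint1 : Integrable (fun ω => φ (x - X' ω i0) * g (X' ω)) P :=
    ⟨((hφc.measurable.comp (measurable_const.sub hmX)).mul
        (hgc.measurable.comp hX')).aestronglyMeasurable,
      HasFiniteIntegral.of_bounded (C := Mφ * Gv) (Filter.Eventually.of_forall fun ω => by
        rw [Real.norm_eq_abs, abs_mul]
        exact mul_le_mul (hφub _) (hgb _) (abs_nonneg _) hMφ)⟩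
  have hNb : |∫ ω, φ (x - X' ω i0) * g (X' ω) ∂P| ≤ Mφ * Gv := by
    calc |∫ ω, φ (x - X' ω i0) * g (X' ω) ∂P|
        ≤ ∫ ω, |φ (x - X' ω i0) * g (X' ω)| ∂P := by
          simpa only [Real.norm_eq_abs] using norm_integral_le_integral_norm (μ := P)
            (fun ω => φ (x - X' ω i0) * g (X' ω))
      _ ≤ ∫ _ω, Mφ * Gv ∂P := integral_mono hint1.abs (integrable_const _)
          fun ω => by
            rw [abs_mul]; exact mul_le_mul (hφub _) (hgb _) (abs_nonneg _) hMφ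
      _ = Mφ * Gv := by simp
  rw [abs_div, abs_of_pos hDpos]
  exact div_le_div₀ (by positivity) hNb hα hD

end Stmt10Aux

set_option maxHeartbeats 1600000 in
/-- Pathwise uniqueness for the regularized (mollified) ABF
McKean–Vlasov equation: with `V` of class `C²` and `ℤ^d`-periodic, `φ = α + ψ`
(`α > 0`, `ψ ≥ 0` of class `C¹`, `ℤ`-periodic with `∫_{[0,1)} ψ = 1`), two solutions
of `dX_t = (-∇V(X_t) + b_φ(Law(X_t), X_t¹) e₁) dt + √2 dW_t` on `[0,T]`, driven by
the same Brownian motion and with almost surely equal initial conditions, coincide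
almost surely on `[0,T]`. -/
theorem stmt10 (d : ℕ) (hd : 0 < d) (T : ℝ) (hT : 0 < T)
    (V : EuclideanSpace ℝ (Fin d) → ℝ) (hV : ContDiff ℝ 2 V)
    (hVper : ∀ (x : EuclideanSpace ℝ (Fin d)) (q : Fin d → ℤ),
      V (x + (show EuclideanSpace ℝ (Fin d) from WithLp.toLp 2 (fun i => (q i : ℝ)))) = V x)
    (α : ℝ) (hα : 0 < α) (ψ : ℝ → ℝ) (hψ : ContDiff ℝ 1 ψ)
    (hψpos : ∀ x, 0 ≤ ψ x) (hψper : ∀ x, ψ (x + 1) = ψ x)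
    (hψint : ∫ x in Set.Ico (0:ℝ) 1, ψ x = 1)
    {Ω : Type*} [m : MeasurableSpace Ω] (P : Measure Ω) [IsProbabilityMeasure P]
    (F : Filtration ℝ m) (W : ℝ → Ω → EuclideanSpace ℝ (Fin d))
    (hW : IsStdBrownian P F W)
    (X Y : ℝ → Ω → EuclideanSpace ℝ (Fin d))
    (hXcont : ∀ ω, Continuous fun t => X t ω) (hXad : Adapted F X)
    (hYcont : ∀ ω, Continuous fun t => Y t ω) (hYad : Adapted F Y)
    (hinit : ∀ᵐ ω ∂P, X 0 ω = Y 0 ω)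
    (hXeq : ∀ᵐ ω ∂P, ∀ t ∈ Set.Icc (0:ℝ) T,
      X t ω = X 0 ω +
        (∫ s in (0:ℝ)..t,
          (-gradient V (X s ω) +
            nwDrift hd V (fun r => α + ψ r) (P.map (X s)) (X s ω ⟨0, hd⟩) •
              EuclideanSpace.single ⟨0, hd⟩ (1:ℝ))) +
        Real.sqrt 2 • W t ω)
    (hYeq : ∀ᵐ ω ∂P, ∀ t ∈ Set.Icc (0:ℝ) T,
      Y t ω = Y 0 ω +
        (∫ s in (0:ℝ)..t,
          (-gradient V (Y s ω) +
            nwDrift hd V (fun r => α + ψ r) (P.map (Y s)) (Y s ω ⟨0, hd⟩) •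
              EuclideanSpace.single ⟨0, hd⟩ (1:ℝ))) +
        Real.sqrt 2 • W t ω) :
    ∀ᵐ ω ∂P, ∀ t ∈ Set.Icc (0:ℝ) T, X t ω = Y t ω := by

  classical
  open Stmt10Aux in
  -- index and direction vector
  set i0 : Fin d := ⟨0, hd⟩ with hi0def
  set e1 : EuclideanSpace ℝ (Fin d) := EuclideanSpace.single i0 (1:ℝ) with he1def
  set φf : ℝ → ℝ := fun r => α + ψ r with hφfdef
  set g : EuclideanSpace ℝ (Fin d) → ℝ := fun z => fderiv ℝ V z e1 with hgdef
  have he1norm : ‖e1‖ = 1 := by rw [he1def, EuclideanSpace.norm_single]; simp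
  -- derivative of V and constants
  have hV1 : ContDiff ℝ 1 (fderiv ℝ V) := hV.fderiv_right (by norm_num)
  have hfdV_cont : Continuous (fderiv ℝ V) := hV1.continuous
  have hfdV_per : ∀ (x : EuclideanSpace ℝ (Fin d)) (q : Fin d → ℤ),
      fderiv ℝ V (x + (show EuclideanSpace ℝ (Fin d) from WithLp.toLp 2 (fun i => (q i : ℝ))))
        = fderiv ℝ V x := fderiv_latticePeriodic V hVper
  obtain ⟨Gv, hGv0, hGvb⟩ := bound_of_latticePeriodic (fderiv ℝ V) hfdV_cont hfdV_per
  have hfdV2_cont : Continuous (fderiv ℝ (fderiv ℝ V)) := hV1.continuous_fderiv (by norm_num)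
  have hfdV2_per := fderiv_latticePeriodic (fderiv ℝ V) hfdV_per
  obtain ⟨Lv, hLv0, hLvb⟩ :=
    bound_of_latticePeriodic (fderiv ℝ (fderiv ℝ V)) hfdV2_cont hfdV2_per
  have hfdV_lip : ∀ x y, ‖fderiv ℝ V x - fderiv ℝ V y‖ ≤ Lv * ‖x - y‖ := by
    intro x y
    have := Convex.norm_image_sub_le_of_norm_fderiv_le (f := fderiv ℝ V)
      (fun z _ => (hV1.differentiable (by norm_num)).differentiableAt)
      (fun z _ => hLvb z) convex_univ (Set.mem_univ y) (Set.mem_univ x)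
    simpa using this
  -- gradient facts
  have hgrad_eq : ∀ x, gradient V x = (InnerProductSpace.toDual ℝ _).symm (fderiv ℝ V x) :=
    fun x => rfl
  have hgradb : ∀ x, ‖gradient V x‖ ≤ Gv := fun x => by
    rw [hgrad_eq, LinearIsometryEquiv.norm_map]; exact hGvb x
  have hgrad_lip : ∀ x y, ‖gradient V x - gradient V y‖ ≤ Lv * ‖x - y‖ := fun x y => by
    rw [hgrad_eq, hgrad_eq, ← LinearIsometryEquiv.map_sub, LinearIsometryEquiv.norm_map]
    exact hfdV_lip x y
  have hgrad_cont : Continuous (gradient V) :=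
    (InnerProductSpace.toDual ℝ _).symm.continuous.comp hfdV_cont
  -- g facts
  have hgcont : Continuous g := by
    rw [hgdef]
    exact hfdV_cont.clm_apply continuous_const
  have hgb : ∀ z, |g z| ≤ Gv := fun z => by
    rw [hgdef, ← Real.norm_eq_abs]
    calc ‖fderiv ℝ V z e1‖ ≤ ‖fderiv ℝ V z‖ * ‖e1‖ := (fderiv ℝ V z).le_opNorm e1
      _ = ‖fderiv ℝ V z‖ := by rw [he1norm, mul_one]
      _ ≤ Gv := hGvb z
  have hglip : ∀ z w, |g z - g w| ≤ Lv * ‖z - w‖ := fun z w => by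
    rw [hgdef, ← Real.norm_eq_abs]
    calc ‖fderiv ℝ V z e1 - fderiv ℝ V w e1‖
        = ‖(fderiv ℝ V z - fderiv ℝ V w) e1‖ := by
          rw [ContinuousLinearMap.sub_apply]
      _ ≤ ‖fderiv ℝ V z - fderiv ℝ V w‖ * ‖e1‖ :=
          (fderiv ℝ V z - fderiv ℝ V w).le_opNorm e1
      _ = ‖fderiv ℝ V z - fderiv ℝ V w‖ := by rw [he1norm, mul_one]
      _ ≤ Lv * ‖z - w‖ := hfdV_lip z w
  -- φ facts
  have hψc : Continuous ψ := hψ.continuous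
  obtain ⟨Cψ, hCψ0, hCψb⟩ := bound_of_periodic_real ψ hψc hψper
  have hψ'per : ∀ x, deriv ψ (x + 1) = deriv ψ x := by
    intro x
    have h1 : (fun y => ψ (y + 1)) = ψ := funext hψper
    calc deriv ψ (x + 1) = deriv (fun y => ψ (y + 1)) x := (deriv_comp_add_const ψ 1 x).symm
      _ = deriv ψ x := by rw [h1]
  obtain ⟨Lφ, hLφ0, hLφb⟩ := bound_of_periodic_real (deriv ψ)
    (hψ.continuous_deriv le_rfl) hψ'per
  have hψdiff : Differentiable ℝ ψ := hψ.differentiable (by norm_num)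
  have hψlip : ∀ x y, |ψ x - ψ y| ≤ Lφ * |x - y| := by
    intro x y
    have := Convex.norm_image_sub_le_of_norm_deriv_le (f := ψ)
      (fun z _ => hψdiff z) (fun z _ => hLφb z)
      convex_univ (Set.mem_univ y) (Set.mem_univ x)
    simpa [Real.norm_eq_abs] using this
  set Mφ : ℝ := α + Cψ with hMφdef
  have hMφ0 : 0 ≤ Mφ := by positivity
  have hφcont : Continuous φf := by rw [hφfdef]; exact continuous_const.add hψc
  have hφlb : ∀ r, α ≤ φf r := fun r => le_add_of_nonneg_right (hψpos r)
  have hφub : ∀ r, |φf r| ≤ Mφ := fun r => by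
    rw [abs_of_pos (lt_of_lt_of_le hα (hφlb r)), hφfdef, hMφdef]
    simp only []
    exact add_le_add le_rfl (le_trans (le_abs_self _) (hCψb r))
  have hφlip : ∀ x y, |φf x - φf y| ≤ Lφ * |x - y| := fun x y => by
    have : φf x - φf y = ψ x - ψ y := by rw [hφfdef]; ring
    rw [this]; exact hψlip x y
  -- constants
  set K0 : ℝ := (Gv * Lφ + Mφ * Lv) / α + Mφ * Gv * Lφ / α ^ 2 with hK0def
  have hK00 : 0 ≤ K0 := by positivity
  set Bb : ℝ := Mφ * Gv / α with hBbdef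
  have hBb0 : 0 ≤ Bb := by positivity
  set B : ℝ := Gv + Bb with hBdef
  have hB0 : 0 ≤ B := by positivity
  set CC : ℝ := Lv + K0 with hCCdef
  have hCC0 : 0 ≤ CC := by positivity
  set R : ℝ := 2 * B * T + 1 with hRdef
  have hR0 : 0 < R := by positivity
  -- measurability of the processes
  have hXm : ∀ s, Measurable (X s) := fun s =>
    (hXad s).mono (F.le s) le_rfl
  have hYm : ∀ s, Measurable (Y s) := fun s =>
    (hYad s).mono (F.le s) le_rfl
  have hZm : ∀ s, Measurable fun ω => ‖X s ω - Y s ω‖ := fun s =>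
    ((hXm s).sub (hYm s)).norm
  haveI hPX : ∀ s, IsProbabilityMeasure (P.map (X s)) := fun s =>
    Measure.isProbabilityMeasure_map (hXm s).aemeasurable
  haveI hPY : ∀ s, IsProbabilityMeasure (P.map (Y s)) := fun s =>
    Measure.isProbabilityMeasure_map (hYm s).aemeasurable
  -- nwDrift bound
  have hnwbX : ∀ (s : ℝ) (x : ℝ), |nwDrift hd V φf (P.map (X s)) x| ≤ Bb := by
    intro s x
    rw [hBbdef]
    simp only [nwDrift]
    exact key_bound i0 P φf g α Mφ Gv hα hGv0 hMφ0 hφcont hgcont hφlb hφub hgb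
      (X s) (hXm s) x
  have hnwbY : ∀ (s : ℝ) (x : ℝ), |nwDrift hd V φf (P.map (Y s)) x| ≤ Bb := by
    intro s x
    rw [hBbdef]
    simp only [nwDrift]
    exact key_bound i0 P φf g α Mφ Gv hα hGv0 hMφ0 hφcont hgcont hφlb hφub hgb
      (Y s) (hYm s) x
  -- drift bound
  have hdriftXb : ∀ s ω,
      ‖-gradient V (X s ω) + nwDrift hd V φf (P.map (X s)) (X s ω i0) • e1‖ ≤ B := by
    intro s ω
    calc ‖-gradient V (X s ω) + nwDrift hd V φf (P.map (X s)) (X s ω i0) • e1‖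
        ≤ ‖-gradient V (X s ω)‖ + ‖nwDrift hd V φf (P.map (X s)) (X s ω i0) • e1‖ :=
          norm_add_le _ _
      _ = ‖gradient V (X s ω)‖ + |nwDrift hd V φf (P.map (X s)) (X s ω i0)| := by
          rw [norm_neg, norm_smul, he1norm, mul_one, Real.norm_eq_abs]
      _ ≤ Gv + Bb := add_le_add (hgradb _) (hnwbX s _)
  have hdriftYb : ∀ s ω,
      ‖-gradient V (Y s ω) + nwDrift hd V φf (P.map (Y s)) (Y s ω i0) • e1‖ ≤ B := by
    intro s ω
    calc ‖-gradient V (Y s ω) + nwDrift hd V φf (P.map (Y s)) (Y s ω i0) • e1‖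
        ≤ ‖-gradient V (Y s ω)‖ + ‖nwDrift hd V φf (P.map (Y s)) (Y s ω i0) • e1‖ :=
          norm_add_le _ _
      _ = ‖gradient V (Y s ω)‖ + |nwDrift hd V φf (P.map (Y s)) (Y s ω i0)| := by
          rw [norm_neg, norm_smul, he1norm, mul_one, Real.norm_eq_abs]
      _ ≤ Gv + Bb := add_le_add (hgradb _) (hnwbY s _)
  -- good events
  have hgood := hinit.and (hXeq.and hYeq)
  have hXdiff : ∀ᵐ ω ∂P, ∀ t ∈ Set.Icc (0:ℝ) T,
      X t ω - Y t ω =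
        (∫ s in (0:ℝ)..t,
          (-gradient V (X s ω) + nwDrift hd V φf (P.map (X s)) (X s ω i0) • e1))
        - (∫ s in (0:ℝ)..t,
          (-gradient V (Y s ω) + nwDrift hd V φf (P.map (Y s)) (Y s ω i0) • e1)) := by
    filter_upwards [hgood] with ω hω
    obtain ⟨h0, hx, hy⟩ := hω
    intro t ht
    rw [hx t ht, hy t ht, h0]
    abel
  have hZbd : ∀ᵐ ω ∂P, ∀ t ∈ Set.Icc (0:ℝ) T, ‖X t ω - Y t ω‖ ≤ 2 * B * T := by
    filter_upwards [hXdiff] with ω hω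
    intro t ht
    rw [hω t ht]
    have h1 : ‖∫ s in (0:ℝ)..t,
        (-gradient V (X s ω) + nwDrift hd V φf (P.map (X s)) (X s ω i0) • e1)‖ ≤ B * T := by
      calc ‖∫ s in (0:ℝ)..t,
          (-gradient V (X s ω) + nwDrift hd V φf (P.map (X s)) (X s ω i0) • e1)‖
          ≤ B * |t - 0| := intervalIntegral.norm_integral_le_of_norm_le_const
            (fun s _ => hdriftXb s ω)
        _ ≤ B * T := by
            rw [sub_zero, abs_of_nonneg ht.1]
            exact mul_le_mul_of_nonneg_left ht.2 hB0
    have h2 : ‖∫ s in (0:ℝ)..t,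
        (-gradient V (Y s ω) + nwDrift hd V φf (P.map (Y s)) (Y s ω i0) • e1)‖ ≤ B * T := by
      calc ‖∫ s in (0:ℝ)..t,
          (-gradient V (Y s ω) + nwDrift hd V φf (P.map (Y s)) (Y s ω i0) • e1)‖
          ≤ B * |t - 0| := intervalIntegral.norm_integral_le_of_norm_le_const
            (fun s _ => hdriftYb s ω)
        _ ≤ B * T := by
            rw [sub_zero, abs_of_nonneg ht.1]
            exact mul_le_mul_of_nonneg_left ht.2 hB0
    calc ‖(∫ s in (0:ℝ)..t,
          (-gradient V (X s ω) + nwDrift hd V φf (P.map (X s)) (X s ω i0) • e1)) -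
        (∫ s in (0:ℝ)..t,
          (-gradient V (Y s ω) + nwDrift hd V φf (P.map (Y s)) (Y s ω i0) • e1))‖
        ≤ ‖∫ s in (0:ℝ)..t,
          (-gradient V (X s ω) + nwDrift hd V φf (P.map (X s)) (X s ω i0) • e1)‖ +
          ‖∫ s in (0:ℝ)..t,
          (-gradient V (Y s ω) + nwDrift hd V φf (P.map (Y s)) (Y s ω i0) • e1)‖ :=
          norm_sub_le _ _
      _ ≤ B * T + B * T := add_le_add h1 h2
      _ = 2 * B * T := by ring
  have hZae : ∀ s ∈ Set.Icc (0:ℝ) T, ∀ᵐ ω ∂P, ‖X s ω - Y s ω‖ ≤ 2 * B * T := by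
    intro s hs
    filter_upwards [hZbd] with ω h using h s hs
  have hZint : ∀ s ∈ Set.Icc (0:ℝ) T, Integrable (fun ω => ‖X s ω - Y s ω‖) P := by
    intro s hs
    refine ⟨(hZm s).aestronglyMeasurable, HasFiniteIntegral.of_bounded (C := 2 * B * T) ?_⟩
    filter_upwards [hZae s hs] with ω h
    simpa using h
  -- the truncated mean distance
  set u : ℝ → ℝ := fun s => ∫ ω, min ‖X s ω - Y s ω‖ R ∂P with hudef
  have huf_meas : ∀ s : ℝ, Measurable fun ω => min ‖X s ω - Y s ω‖ R := fun s =>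
    (hZm s).min measurable_const
  have huf_nonneg : ∀ (s : ℝ) ω, 0 ≤ min ‖X s ω - Y s ω‖ R := fun s ω =>
    le_min (norm_nonneg _) hR0.le
  have huf_bdd : ∀ (s : ℝ) ω, |min ‖X s ω - Y s ω‖ R| ≤ R := fun s ω => by
    rw [abs_of_nonneg (huf_nonneg s ω)]
    exact min_le_right _ _
  have huf_int : ∀ s : ℝ, Integrable (fun ω => min ‖X s ω - Y s ω‖ R) P := fun s =>
    Stmt10Aux.integrable_of_bdd (huf_meas s).aestronglyMeasurable R (huf_bdd s)
  have hu0 : ∀ s, 0 ≤ u s := fun s => integral_nonneg fun ω => huf_nonneg s ω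
  have huR : ∀ s, u s ≤ R := by
    intro s
    calc u s ≤ ∫ _ω, R ∂P := by
          exact integral_mono (huf_int s) (integrable_const R) fun ω => min_le_right _ _
      _ = R := by simp
  have hucont : Continuous u := by
    rw [hudef]
    apply continuous_of_dominated (bound := fun _ => R)
      (fun s => (huf_meas s).aestronglyMeasurable)
      (fun s => Filter.Eventually.of_forall fun ω => by
        simpa [Real.norm_eq_abs] using huf_bdd s ω)
      (integrable_const R)
    exact Filter.Eventually.of_forall fun ω =>
      (((hXcont ω).sub (hYcont ω)).norm.min continuous_const)
  have huZ : ∀ s ∈ Set.Icc (0:ℝ) T, u s = ∫ ω, ‖X s ω - Y s ω‖ ∂P := by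
    intro s hs
    apply integral_congr_ae
    filter_upwards [hZae s hs] with ω h
    exact min_eq_left (le_trans h (by rw [hRdef]; linarith))
  -- nwDrift as a ratio of Ω-integrals
  have hmXc : ∀ s : ℝ, Measurable fun ω' => X s ω' i0 := fun s =>
    (EuclideanSpace.proj i0).continuous.measurable.comp (hXm s)
  have hmYc : ∀ s : ℝ, Measurable fun ω' => Y s ω' i0 := fun s =>
    (EuclideanSpace.proj i0).continuous.measurable.comp (hYm s)
  have hnwXeq : ∀ (s : ℝ) (x : ℝ), nwDrift hd V φf (P.map (X s)) x
      = (∫ ω', φf (x - X s ω' i0) * g (X s ω') ∂P) / (∫ ω', φf (x - X s ω' i0) ∂P) := by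
    intro s x
    simp only [nwDrift]
    rw [← hi0def, ← he1def]
    rw [map_num i0 P φf g hφcont hgcont (X s) (hXm s) x,
      map_den i0 P φf hφcont (X s) (hXm s) x]
  have hnwYeq : ∀ (s : ℝ) (x : ℝ), nwDrift hd V φf (P.map (Y s)) x
      = (∫ ω', φf (x - Y s ω' i0) * g (Y s ω') ∂P) / (∫ ω', φf (x - Y s ω' i0) ∂P) := by
    intro s x
    simp only [nwDrift]
    rw [← hi0def, ← he1def]
    rw [map_num i0 P φf g hφcont hgcont (Y s) (hYm s) x,
      map_den i0 P φf hφcont (Y s) (hYm s) x]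
  have hDXpos : ∀ (s x : ℝ), 0 < ∫ ω', φf (x - X s ω' i0) ∂P := fun s x =>
    lt_of_lt_of_le hα (den_props i0 P φf α Mφ hφcont hφlb hφub (X s) (hXm s) x)
  have hDYpos : ∀ (s x : ℝ), 0 < ∫ ω', φf (x - Y s ω' i0) ∂P := fun s x =>
    lt_of_lt_of_le hα (den_props i0 P φf α Mφ hφcont hφlb hφub (Y s) (hYm s) x)
  -- continuity of the drift along paths
  have hfXcont : ∀ ω, Continuous fun s =>
      -gradient V (X s ω) + nwDrift hd V φf (P.map (X s)) (X s ω i0) • e1 := by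
    intro ω
    apply Continuous.add
    · exact (hgrad_cont.comp (hXcont ω)).neg
    · apply Continuous.fun_smul _ continuous_const
      have heq : (fun s => nwDrift hd V φf (P.map (X s)) (X s ω i0))
          = fun s => (∫ ω', φf (X s ω i0 - X s ω' i0) * g (X s ω') ∂P)
            / (∫ ω', φf (X s ω i0 - X s ω' i0) ∂P) := funext fun s => hnwXeq s _
      rw [heq]
      have hXsω : Continuous fun s => X s ω i0 :=
        (EuclideanSpace.proj i0).continuous.comp (hXcont ω)
      apply Continuous.div
      · apply continuous_of_dominated (bound := fun _ => Mφ * Gv)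
          (fun s => ((hφcont.measurable.comp
            (measurable_const.sub (hmXc s))).mul
            (hgcont.measurable.comp (hXm s))).aestronglyMeasurable)
          (fun s => Filter.Eventually.of_forall fun ω' => by
            rw [Real.norm_eq_abs, Pi.mul_apply, abs_mul]
            exact mul_le_mul (hφub _) (hgb _) (abs_nonneg _) hMφ0)
          (integrable_const _)
        apply Filter.Eventually.of_forall
        intro ω'
        have hXsω' : Continuous fun s => X s ω' i0 :=
          (EuclideanSpace.proj i0).continuous.comp (hXcont ω')
        exact (hφcont.comp (hXsω.sub hXsω')).mul (hgcont.comp (hXcont ω'))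
      · apply continuous_of_dominated (bound := fun _ => Mφ)
          (fun s => (hφcont.measurable.comp
            (measurable_const.sub (hmXc s))).aestronglyMeasurable)
          (fun s => Filter.Eventually.of_forall fun ω' => by
            rw [Real.norm_eq_abs]
            exact hφub _)
          (integrable_const _)
        apply Filter.Eventually.of_forall
        intro ω'
        have hXsω' : Continuous fun s => X s ω' i0 :=
          (EuclideanSpace.proj i0).continuous.comp (hXcont ω')
        exact hφcont.comp (hXsω.sub hXsω')
      · exact fun s => ne_of_gt (hDXpos s _)
  have hfYcont : ∀ ω, Continuous fun s =>
      -gradient V (Y s ω) + nwDrift hd V φf (P.map (Y s)) (Y s ω i0) • e1 := by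
    intro ω
    apply Continuous.add
    · exact (hgrad_cont.comp (hYcont ω)).neg
    · apply Continuous.fun_smul _ continuous_const
      have heq : (fun s => nwDrift hd V φf (P.map (Y s)) (Y s ω i0))
          = fun s => (∫ ω', φf (Y s ω i0 - Y s ω' i0) * g (Y s ω') ∂P)
            / (∫ ω', φf (Y s ω i0 - Y s ω' i0) ∂P) := funext fun s => hnwYeq s _
      rw [heq]
      have hYsω : Continuous fun s => Y s ω i0 :=
        (EuclideanSpace.proj i0).continuous.comp (hYcont ω)
      apply Continuous.div
      · apply continuous_of_dominated (bound := fun _ => Mφ * Gv)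
          (fun s => ((hφcont.measurable.comp
            (measurable_const.sub (hmYc s))).mul
            (hgcont.measurable.comp (hYm s))).aestronglyMeasurable)
          (fun s => Filter.Eventually.of_forall fun ω' => by
            rw [Real.norm_eq_abs, Pi.mul_apply, abs_mul]
            exact mul_le_mul (hφub _) (hgb _) (abs_nonneg _) hMφ0)
          (integrable_const _)
        apply Filter.Eventually.of_forall
        intro ω'
        have hYsω' : Continuous fun s => Y s ω' i0 :=
          (EuclideanSpace.proj i0).continuous.comp (hYcont ω')
        exact (hφcont.comp (hYsω.sub hYsω')).mul (hgcont.comp (hYcont ω'))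
      · apply continuous_of_dominated (bound := fun _ => Mφ)
          (fun s => (hφcont.measurable.comp
            (measurable_const.sub (hmYc s))).aestronglyMeasurable)
          (fun s => Filter.Eventually.of_forall fun ω' => by
            rw [Real.norm_eq_abs]
            exact hφub _)
          (integrable_const _)
        apply Filter.Eventually.of_forall
        intro ω'
        have hYsω' : Continuous fun s => Y s ω' i0 :=
          (EuclideanSpace.proj i0).continuous.comp (hYcont ω')
        exact hφcont.comp (hYsω.sub hYsω')
      · exact fun s => ne_of_gt (hDYpos s _)
  have hfXint : ∀ ω (t : ℝ), IntervalIntegrable (fun s =>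
      -gradient V (X s ω) + nwDrift hd V φf (P.map (X s)) (X s ω i0) • e1)
      MeasureTheory.volume 0 t := fun ω t => (hfXcont ω).intervalIntegrable 0 t
  have hfYint : ∀ ω (t : ℝ), IntervalIntegrable (fun s =>
      -gradient V (Y s ω) + nwDrift hd V φf (P.map (Y s)) (Y s ω i0) • e1)
      MeasureTheory.volume 0 t := fun ω t => (hfYcont ω).intervalIntegrable 0 t
  -- nwDrift difference bound via the key estimate
  have hnwdiff : ∀ s ∈ Set.Icc (0:ℝ) T, ∀ a b : ℝ,
      |nwDrift hd V φf (P.map (X s)) a - nwDrift hd V φf (P.map (Y s)) b|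
        ≤ K0 * (|a - b| + ∫ ω, ‖X s ω - Y s ω‖ ∂P) := by
    intro s hs a b
    rw [hK0def]
    simp only [nwDrift]
    rw [← hi0def, ← he1def]
    exact key i0 P φf g α Mφ Lφ Gv Lv hα hGv0 hLφ0 hMφ0 hLv0 hφcont hgcont hφlb
      hφub hφlip hgb hglip (X s) (Y s) (hXm s) (hYm s) (hZint s hs) a b
  -- pointwise drift difference bound
  have hdriftdiff : ∀ ω, ∀ s ∈ Set.Icc (0:ℝ) T,
      ‖(-gradient V (X s ω) + nwDrift hd V φf (P.map (X s)) (X s ω i0) • e1)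
        - (-gradient V (Y s ω) + nwDrift hd V φf (P.map (Y s)) (Y s ω i0) • e1)‖
        ≤ CC * (‖X s ω - Y s ω‖ + u s) := by
    intro ω s hs
    have heq : (-gradient V (X s ω) + nwDrift hd V φf (P.map (X s)) (X s ω i0) • e1)
        - (-gradient V (Y s ω) + nwDrift hd V φf (P.map (Y s)) (Y s ω i0) • e1)
        = (gradient V (Y s ω) - gradient V (X s ω))
          + (nwDrift hd V φf (P.map (X s)) (X s ω i0)
            - nwDrift hd V φf (P.map (Y s)) (Y s ω i0)) • e1 := by
      rw [sub_smul]; abel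
    rw [heq]
    calc ‖(gradient V (Y s ω) - gradient V (X s ω))
          + (nwDrift hd V φf (P.map (X s)) (X s ω i0)
            - nwDrift hd V φf (P.map (Y s)) (Y s ω i0)) • e1‖
        ≤ ‖gradient V (Y s ω) - gradient V (X s ω)‖
          + ‖(nwDrift hd V φf (P.map (X s)) (X s ω i0)
            - nwDrift hd V φf (P.map (Y s)) (Y s ω i0)) • e1‖ := norm_add_le _ _
      _ = ‖gradient V (Y s ω) - gradient V (X s ω)‖
          + |nwDrift hd V φf (P.map (X s)) (X s ω i0)
            - nwDrift hd V φf (P.map (Y s)) (Y s ω i0)| := by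
          rw [norm_smul, he1norm, mul_one, Real.norm_eq_abs]
      _ ≤ Lv * ‖Y s ω - X s ω‖
          + K0 * (|X s ω i0 - Y s ω i0| + ∫ ω', ‖X s ω' - Y s ω'‖ ∂P) :=
          add_le_add (hgrad_lip _ _) (hnwdiff s hs _ _)
      _ ≤ Lv * ‖X s ω - Y s ω‖ + K0 * (‖X s ω - Y s ω‖ + u s) := by
          rw [norm_sub_rev (Y s ω), ← huZ s hs]
          gcongr
          exact abs_coord_sub_le_norm _ _ _
      _ ≤ CC * (‖X s ω - Y s ω‖ + u s) := by
          rw [hCCdef]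
          nlinarith [norm_nonneg (X s ω - Y s ω), hu0 s, hK00, hLv0]
  -- the pathwise integral inequality
  have hmain : ∀ᵐ ω ∂P, ∀ t ∈ Set.Icc (0:ℝ) T,
      min ‖X t ω - Y t ω‖ R
        ≤ ∫ s in (0:ℝ)..t, CC * (min ‖X s ω - Y s ω‖ R + u s) := by
    filter_upwards [hXdiff, hZbd] with ω h1 h2
    intro t ht
    have h0t : (0:ℝ) ≤ t := ht.1
    have hsub : X t ω - Y t ω = ∫ s in (0:ℝ)..t,
        ((-gradient V (X s ω) + nwDrift hd V φf (P.map (X s)) (X s ω i0) • e1)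
          - (-gradient V (Y s ω) + nwDrift hd V φf (P.map (Y s)) (Y s ω i0) • e1)) := by
      rw [intervalIntegral.integral_sub (hfXint ω t) (hfYint ω t)]
      exact h1 t ht
    have hboundae : ∀ s ∈ Set.uIoc (0:ℝ) t,
        ‖(-gradient V (X s ω) + nwDrift hd V φf (P.map (X s)) (X s ω i0) • e1)
          - (-gradient V (Y s ω) + nwDrift hd V φf (P.map (Y s)) (Y s ω i0) • e1)‖
          ≤ CC * (min ‖X s ω - Y s ω‖ R + u s) := by
      intro s hs
      rw [Set.uIoc_of_le h0t] at hs
      have hsIcc : s ∈ Set.Icc (0:ℝ) T := ⟨hs.1.le, le_trans hs.2 ht.2⟩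
      have hmin : min ‖X s ω - Y s ω‖ R = ‖X s ω - Y s ω‖ :=
        min_eq_left (le_trans (h2 s hsIcc) (by rw [hRdef]; linarith))
      rw [hmin]
      exact hdriftdiff ω s hsIcc
    have hgint : IntervalIntegrable
        (fun s => CC * (min ‖X s ω - Y s ω‖ R + u s)) MeasureTheory.volume 0 t :=
      (continuous_const.mul
        (((((hXcont ω).sub (hYcont ω)).norm.min continuous_const)).add
          hucont)).intervalIntegrable 0 t
    calc min ‖X t ω - Y t ω‖ R ≤ ‖X t ω - Y t ω‖ := min_le_left _ _
      _ = ‖∫ s in (0:ℝ)..t,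
          ((-gradient V (X s ω) + nwDrift hd V φf (P.map (X s)) (X s ω i0) • e1)
            - (-gradient V (Y s ω) + nwDrift hd V φf (P.map (Y s)) (Y s ω i0) • e1))‖ := by
          rw [hsub]
      _ ≤ |∫ s in (0:ℝ)..t, CC * (min ‖X s ω - Y s ω‖ R + u s)| :=
          intervalIntegral.norm_integral_le_abs_of_norm_le
            ((ae_restrict_iff' measurableSet_uIoc).mpr
              (Filter.Eventually.of_forall hboundae)) hgint
      _ = ∫ s in (0:ℝ)..t, CC * (min ‖X s ω - Y s ω‖ R + u s) :=
          abs_of_nonneg (intervalIntegral.integral_nonneg h0t fun s _ =>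
            mul_nonneg hCC0 (add_nonneg (huf_nonneg s ω) (hu0 s)))
  -- expectation: Fubini
  have hexp : ∀ t ∈ Set.Icc (0:ℝ) T, u t ≤ ∫ s in (0:ℝ)..t, 2 * CC * u s := by
    intro t ht
    have h0t : (0:ℝ) ≤ t := ht.1
    haveI hνfin : IsFiniteMeasure (MeasureTheory.volume.restrict (Set.Ioc (0:ℝ) t)) := by
      constructor
      rw [Measure.restrict_apply_univ, Real.volume_Ioc]
      exact ENNReal.ofReal_lt_top
    have hkern_m : StronglyMeasurable
        (Function.uncurry fun ω s => CC * (min ‖X s ω - Y s ω‖ R + u s)) := by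
      have hZunc : Measurable (Function.uncurry fun s ω => ‖X s ω - Y s ω‖) :=
        measurable_uncurry_of_continuous_of_measurable
          (fun ω => ((hXcont ω).sub (hYcont ω)).norm) hZm
      apply Measurable.stronglyMeasurable
      have hrfl : (Function.uncurry fun ω s => CC * (min ‖X s ω - Y s ω‖ R + u s))
          = fun p : Ω × ℝ => CC *
            (min ((Function.uncurry fun s ω => ‖X s ω - Y s ω‖) p.swap) R + u p.2) := rfl
      rw [hrfl]
      exact (((hZunc.comp measurable_swap).min measurable_const).add
        (hucont.measurable.comp measurable_snd)).const_mul CC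
    have hkern_int : Integrable
        (Function.uncurry fun ω s => CC * (min ‖X s ω - Y s ω‖ R + u s))
        (P.prod (MeasureTheory.volume.restrict (Set.Ioc (0:ℝ) t))) := by
      refine ⟨hkern_m.aestronglyMeasurable,
        HasFiniteIntegral.of_bounded (C := CC * (R + R)) ?_⟩
      apply Filter.Eventually.of_forall
      rintro ⟨ω, s⟩
      rw [Function.uncurry_apply_pair, Real.norm_eq_abs,
        abs_of_nonneg (mul_nonneg hCC0 (add_nonneg (huf_nonneg s ω) (hu0 s)))]
      exact mul_le_mul_of_nonneg_left (add_le_add (min_le_right _ _) (huR s)) hCC0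
    have hswap := integral_integral_swap hkern_int
    have hinner : ∀ s : ℝ, (∫ ω, CC * (min ‖X s ω - Y s ω‖ R + u s) ∂P)
        = 2 * CC * u s := by
      intro s
      rw [int_const_mul P CC _, integral_add (huf_int s) (integrable_const _),
        integral_const]
      have hus : (∫ ω, min ‖X s ω - Y s ω‖ R ∂P) = u s := rfl
      rw [hus]
      simp [measure_univ]
      ring
    have hGint : Integrable (fun ω => ∫ s, CC * (min ‖X s ω - Y s ω‖ R + u s)
        ∂(MeasureTheory.volume.restrict (Set.Ioc (0:ℝ) t))) P := by
      refine integrable_of_bdd hkern_m.integral_prod_right'.aestronglyMeasurable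
        (CC * (R + R) *
          ((MeasureTheory.volume.restrict (Set.Ioc (0:ℝ) t)) Set.univ).toReal)
        fun ω => ?_
      rw [← Real.norm_eq_abs]
      apply norm_integral_le_of_norm_le_const
      apply Filter.Eventually.of_forall
      intro s
      rw [Real.norm_eq_abs,
        abs_of_nonneg (mul_nonneg hCC0 (add_nonneg (huf_nonneg s ω) (hu0 s)))]
      exact mul_le_mul_of_nonneg_left (add_le_add (min_le_right _ _) (huR s)) hCC0
    calc u t ≤ ∫ ω, (∫ s, CC * (min ‖X s ω - Y s ω‖ R + u s)
          ∂(MeasureTheory.volume.restrict (Set.Ioc (0:ℝ) t))) ∂P := by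
          apply integral_mono_ae (huf_int t) hGint
          filter_upwards [hmain] with ω hω
          have h2 := hω t ht
          rwa [intervalIntegral.integral_of_le h0t] at h2
      _ = ∫ s, (∫ ω, CC * (min ‖X s ω - Y s ω‖ R + u s) ∂P)
          ∂(MeasureTheory.volume.restrict (Set.Ioc (0:ℝ) t)) := hswap
      _ = ∫ s, 2 * CC * u s ∂(MeasureTheory.volume.restrict (Set.Ioc (0:ℝ) t)) :=
          integral_congr_ae (Filter.Eventually.of_forall fun s => hinner s)
      _ = ∫ s in (0:ℝ)..t, 2 * CC * u s := (intervalIntegral.integral_of_le h0t).symm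
  -- Gronwall
  have huzero : ∀ t ∈ Set.Icc (0:ℝ) T, u t = 0 := by
    have hGder : ∀ r : ℝ, HasDerivAt (fun x => ∫ s in (0:ℝ)..x, u s) (u r) r := fun r =>
      intervalIntegral.integral_hasDerivAt_right (hucont.intervalIntegrable _ _)
        (hucont.stronglyMeasurable.stronglyMeasurableAtFilter)
        hucont.continuousAt
    have hGcont : Continuous fun x => ∫ s in (0:ℝ)..x, u s :=
      continuous_iff_continuousAt.mpr fun r => (hGder r).continuousAt
    have hGnn : ∀ x : ℝ, 0 ≤ x → 0 ≤ ∫ s in (0:ℝ)..x, u s := fun x hx =>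
      intervalIntegral.integral_nonneg hx fun s _ => hu0 s
    have hbound : ∀ x ∈ Set.Ico (0:ℝ) T,
        ‖u x‖ ≤ 2 * CC * ‖∫ s in (0:ℝ)..x, u s‖ + 0 := by
      intro x hx
      rw [Real.norm_eq_abs, Real.norm_eq_abs, abs_of_nonneg (hu0 x),
        abs_of_nonneg (hGnn x hx.1), add_zero]
      calc u x ≤ ∫ s in (0:ℝ)..x, 2 * CC * u s := hexp x ⟨hx.1, hx.2.le⟩
        _ = 2 * CC * ∫ s in (0:ℝ)..x, u s :=
            intervalIntegral.integral_const_mul _ _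
    have hgron := norm_le_gronwallBound_of_norm_deriv_right_le (a := 0) (b := T)
      (δ := 0) (K := 2 * CC) (ε := 0)
      hGcont.continuousOn (fun x _ => (hGder x).hasDerivWithinAt) (by simp) hbound
    intro t ht
    have h1 := hgron t ht
    rw [gronwallBound_ε0] at h1
    simp only [zero_mul] at h1
    have h2 : (∫ s in (0:ℝ)..t, u s) = 0 :=
      le_antisymm (le_trans (le_abs_self _) (by rwa [Real.norm_eq_abs] at h1))
        (hGnn t ht.1)
    have h3 : u t ≤ 0 := by
      calc u t ≤ ∫ s in (0:ℝ)..t, 2 * CC * u s := hexp t ht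
        _ = 2 * CC * ∫ s in (0:ℝ)..t, u s := intervalIntegral.integral_const_mul _ _
        _ = 0 := by rw [h2]; ring
    exact le_antisymm h3 (hu0 t)
  -- each fixed time
  have hteq : ∀ t ∈ Set.Icc (0:ℝ) T, ∀ᵐ ω ∂P, X t ω = Y t ω := by
    intro t ht
    have h0 : ∫ ω, min ‖X t ω - Y t ω‖ R ∂P = 0 := huzero t ht
    have hae := (integral_eq_zero_iff_of_nonneg
      (fun ω => huf_nonneg t ω) (huf_int t)).mp h0
    filter_upwards [hae] with ω hω
    simp only [Pi.zero_apply] at hω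
    have hn : ‖X t ω - Y t ω‖ = 0 := by
      rcases le_total ‖X t ω - Y t ω‖ R with h|h
      · rwa [min_eq_left h] at hω
      · rw [min_eq_right h] at hω
        exact absurd hω (ne_of_gt hR0)
    have := norm_eq_zero.mp hn
    exact sub_eq_zero.mp this
  -- conclude by density of rational times
  have hrat : ∀ᵐ ω ∂P, ∀ q : ℚ, (q:ℝ) ∈ Set.Icc (0:ℝ) T → X (q:ℝ) ω = Y (q:ℝ) ω := by
    rw [MeasureTheory.ae_all_iff]
    intro q
    by_cases hq : (q:ℝ) ∈ Set.Icc (0:ℝ) T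
    · filter_upwards [hteq q hq] with ω h _
      exact h
    · exact Filter.Eventually.of_forall fun ω h => absurd h hq
  filter_upwards [hrat, hinit] with ω hω h0ω
  intro t ht
  rcases eq_or_lt_of_le ht.1 with h|h
  · rw [← h]
    exact h0ω
  · have hseq : ∀ n : ℕ, ∃ q : ℚ, max 0 (t - 1/((n:ℝ)+1)) < (q:ℝ) ∧ (q:ℝ) < t := by
      intro n
      apply exists_rat_btwn
      apply max_lt h
      have hpos : (0:ℝ) < 1/((n:ℝ)+1) := by positivity
      linarith
    choose q hq1 hq2 using hseq
    have hmem : ∀ n, ((q n : ℝ)) ∈ Set.Icc (0:ℝ) T := fun n =>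
      ⟨le_of_lt (lt_of_le_of_lt (le_max_left _ _) (hq1 n)), le_trans (hq2 n).le ht.2⟩
    have hlow : ∀ n : ℕ, t - 1/((n:ℝ)+1) ≤ (q n : ℝ) := fun n =>
      (lt_of_le_of_lt (le_max_right _ _) (hq1 n)).le
    have htendlow : Filter.Tendsto (fun n : ℕ => t - 1/((n:ℝ)+1))
        Filter.atTop (nhds t) := by
      have h1 : Filter.Tendsto (fun n : ℕ => 1/((n:ℝ)+1)) Filter.atTop (nhds 0) :=
        tendsto_one_div_add_atTop_nhds_zero_nat
      have h2 := Filter.Tendsto.sub (tendsto_const_nhds (x := t)) h1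
      simpa using h2
    have htend : Filter.Tendsto (fun n => (q n : ℝ)) Filter.atTop (nhds t) :=
      tendsto_of_tendsto_of_tendsto_of_le_of_le htendlow tendsto_const_nhds hlow
        fun n => (hq2 n).le
    have hXlim : Filter.Tendsto (fun n => X (q n : ℝ) ω) Filter.atTop (nhds (X t ω)) :=
      ((hXcont ω).tendsto t).comp htend
    have hYlim : Filter.Tendsto (fun n => Y (q n : ℝ) ω) Filter.atTop (nhds (Y t ω)) :=
      ((hYcont ω).tendsto t).comp htend
    have heqseq : (fun n => X (q n : ℝ) ω) = fun n => Y (q n : ℝ) ω :=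
      funext fun n => hω (q n) (hmem n)
    rw [heqseq] at hXlim
    exact tendsto_nhds_unique hXlim hYlim
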